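/- For each k ≥ 3 and each n ≥ k+1, there exists a k-hypergraph on an n-element vertex set that is separable but not orderable. -/

import Mathlib

variable {V : Type*} [DecidableEq V]

/-- Position `i` of the ordering `l` is *dominating* for the `k`-hypergraph `H`:
every `k`-set `E` with `l.get i ∈ E` contained in the first `i+1` vertices of `l`
is an edge of `H`. -/
def DomAt (k : ℕ) (H : Finset (Finset V)) (l : List V) (i : Fin l.length) : Prop :=
  ∀ E : Finset V, E.card = k → l.get i ∈ E →
    (∀ x ∈ E, x ∈ l.take ((i : ℕ) + 1)) → E ∈ H

/-- Position `i` of the ordering `l` is *isolating* for the `k`-hypergraph `H`: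
every `k`-set `E` with `l.get i ∈ E` contained in the first `i+1` vertices of `l`
is a non-edge of `H`. -/
def IsoAt (k : ℕ) (H : Finset (Finset V)) (l : List V) (i : Fin l.length) : Prop :=
  ∀ E : Finset V, E.card = k → l.get i ∈ E →
    (∀ x ∈ E, x ∈ l.take ((i : ℕ) + 1)) → E ∉ H

/-- `l` is an elimination order for `H`: each position is dominating or isolating. -/
def IsElimOrder (k : ℕ) (H : Finset (Finset V)) (l : List V) : Prop :=
  ∀ i : Fin l.length, DomAt k H l i ∨ IsoAt k H l i

/-- `H` is orderable on vertex set `W`: some enumeration of `W` is an elimination order. -/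
def Orderable (k : ℕ) (H : Finset (Finset V)) (W : Finset V) : Prop :=
  ∃ l : List V, l.Nodup ∧ l.toFinset = W ∧ IsElimOrder k H l

/-- `H` is separable on vertex set `W`: for some labeling `a : V → ℤ`,
`H = {E ⊆ W : |E| = k, a(E) ≥ 0}`. -/
def Separable (k : ℕ) (H : Finset (Finset V)) (W : Finset V) : Prop :=
  ∃ a : V → ℤ, ∀ E : Finset V, E ∈ H ↔ (E ⊆ W ∧ E.card = k ∧ 0 ≤ ∑ v ∈ E, a v)

/-- `M` is a perfect matching of the vertex set `W`: its edges are pairwise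
disjoint and their union is `W`. -/
def IsPerfectMatching (M : Finset (Finset V)) (W : Finset V) : Prop :=
  (M : Set (Finset V)).PairwiseDisjoint id ∧ M.biUnion id = W


lemma pick_subset {α : Type*} [DecidableEq α] (S : Finset α) (v : α) (hv : v ∈ S)
    (m : ℕ) (hm : 1 ≤ m) (hmS : m ≤ S.card) :
    ∃ T, T ⊆ S ∧ v ∈ T ∧ T.card = m := by
  obtain ⟨C, h1, h2, h3⟩ := Finset.exists_subsuperset_card_eq (n := m)
    (Finset.singleton_subset_iff.mpr hv) (by simp; omega) hmS
  exact ⟨C, h2, h1 (Finset.mem_singleton_self v), h3⟩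

lemma build (n p : ℕ) (hpn : p < n) (s t : ℕ) (hs : s ≤ p) (ht : t ≤ n - p)
    (v : Fin n) (hv : ((v : ℕ) < p ∧ 1 ≤ s) ∨ (p ≤ (v : ℕ) ∧ 1 ≤ t)) :
    ∃ E : Finset (Fin n), E.card = s + t ∧ v ∈ E ∧
      ∑ u ∈ E, (if (u : ℕ) < p then (1 : ℤ) else -1) = (s : ℤ) - t := by
  set w : Fin n := ⟨p, hpn⟩ with hw
  have hP : ∀ u : Fin n, u ∈ Finset.Iio w ↔ (u : ℕ) < p := by
    intro u; exact Finset.mem_Iio.trans Fin.lt_def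
  have hPc : ∀ u : Fin n, u ∈ (Finset.Iio w)ᶜ ↔ p ≤ (u : ℕ) := by
    intro u; exact Finset.mem_compl.trans (Finset.mem_Iio.not.trans (not_lt.trans Fin.le_def))
  have hcardP : (Finset.Iio w).card = p := by simp [hw]
  have hcardPc : ((Finset.Iio w)ᶜ).card = n - p := by
    rw [Finset.card_compl, hcardP]; simp
  -- pick A ⊆ Iio w of card s, B ⊆ compl of card t, with v in the right one
  have hA : ∃ A, A ⊆ Finset.Iio w ∧ A.card = s ∧ ((v:ℕ) < p → v ∈ A) := by
    rcases hv with ⟨hvp, hs1⟩ | ⟨hvp, _⟩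
    · obtain ⟨A, h1, h2, h3⟩ := pick_subset (Finset.Iio w) v ((hP v).mpr hvp) s hs1
        (by omega)
      exact ⟨A, h1, h3, fun _ => h2⟩
    · obtain ⟨A, h1, h2⟩ := Finset.exists_subset_card_eq (s := Finset.Iio w) (n := s) (by omega)
      exact ⟨A, h1, h2, fun h => absurd h (by omega)⟩
  have hB : ∃ B, B ⊆ (Finset.Iio w)ᶜ ∧ B.card = t ∧ (p ≤ (v:ℕ) → v ∈ B) := by
    rcases hv with ⟨hvp, _⟩ | ⟨hvp, ht1⟩
    · obtain ⟨B, h1, h2⟩ := Finset.exists_subset_card_eq (s := (Finset.Iio w)ᶜ) (n := t) (by omega)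
      exact ⟨B, h1, h2, fun h => absurd h (by omega)⟩
    · obtain ⟨B, h1, h2, h3⟩ := pick_subset ((Finset.Iio w)ᶜ) v ((hPc v).mpr hvp) t ht1
        (by omega)
      exact ⟨B, h1, h3, fun _ => h2⟩
  obtain ⟨A, hAsub, hAcard, hAv⟩ := hA
  obtain ⟨B, hBsub, hBcard, hBv⟩ := hB
  have hdisj : Disjoint A B := by
    refine Finset.disjoint_left.mpr fun u hu hu' => ?_
    have := (hP u).mp (hAsub hu)
    have := (hPc u).mp (hBsub hu')
    omega
  refine ⟨A ∪ B, ?_, ?_, ?_⟩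
  · rw [Finset.card_union_of_disjoint hdisj, hAcard, hBcard]
  · rcases lt_or_ge (v : ℕ) p with h | h
    · exact Finset.mem_union_left _ (hAv h)
    · exact Finset.mem_union_right _ (hBv h)
  · rw [Finset.sum_union hdisj]
    have h1 : ∑ u ∈ A, (if (u : ℕ) < p then (1 : ℤ) else -1) = (s : ℤ) := by
      rw [Finset.sum_congr rfl (fun u hu => if_pos ((hP u).mp (hAsub hu)))]
      simp [hAcard]
    have h2 : ∑ u ∈ B, (if (u : ℕ) < p then (1 : ℤ) else -1) = -(t : ℤ) := by
      rw [Finset.sum_congr rfl (fun u hu => if_neg (by have := (hPc u).mp (hBsub hu); omega))]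
      simp [hBcard]
    rw [h1, h2]; ring

/-- For each `k ≥ 3` and each `n ≥ k + 1` there is a
`k`-hypergraph on an `n`-element vertex set that is separable but not orderable. -/
theorem exists_separable_not_orderable (k n : ℕ) (hk : 3 ≤ k) (hn : k + 1 ≤ n) :
    ∃ H : Finset (Finset (Fin n)),
      (∀ E ∈ H, E.card = k) ∧
      Separable k H Finset.univ ∧
      ¬ Orderable k H Finset.univ := by
  set p : ℕ := (k + 1) / 2 with hp
  have hpk : 2 ≤ p ∧ p < k ∧ k ≤ 2 * p ∧ 2 * p ≤ k + 1 := by omega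
  have hpn : p < n := by omega
  set a : Fin n → ℤ := fun v => if (v : ℕ) < p then (1 : ℤ) else -1 with ha
  refine ⟨Finset.univ.filter (fun E => E.card = k ∧ 0 ≤ ∑ v ∈ E, a v), ?_, ?_, ?_⟩
  · intro E hE
    exact ((Finset.mem_filter.mp hE).2).1
  · refine ⟨a, fun E => ?_⟩
    simp only [Finset.mem_filter, Finset.mem_univ, true_and, Finset.subset_univ]
  · rintro ⟨l, hnd, htf, helim⟩
    have hlen : l.length = n := by
      have h1 : l.toFinset.card = l.length := List.toFinset_card_of_nodup hnd
      rw [htf] at h1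
      simpa using h1.symm
    have hi : n - 1 < l.length := by omega
    set i : Fin l.length := ⟨n - 1, hi⟩ with hidef
    set v : Fin n := l.get i with hv
    have htake : ∀ (E : Finset (Fin n)), ∀ x ∈ E, x ∈ l.take ((i : ℕ) + 1) := by
      intro E x _
      have : l.take ((i : ℕ) + 1) = l := by
        apply List.take_of_length_le
        simp [hidef, hlen]; omega
      rw [this, ← List.mem_toFinset, htf]
      exact Finset.mem_univ x
    -- edge through v
    obtain ⟨E, hEcard, hEv, hEsum⟩ := build n p hpn p (k - p) le_rfl (by omega) v
      (by rcases lt_or_ge (v : ℕ) p with h | h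
          · exact Or.inl ⟨h, by omega⟩
          · exact Or.inr ⟨h, by omega⟩)
    have hEcard' : E.card = k := by rw [hEcard]; omega
    have hEH : E ∈ Finset.univ.filter (fun E => E.card = k ∧ 0 ≤ ∑ v ∈ E, a v) := by
      refine Finset.mem_filter.mpr ⟨Finset.mem_univ _, hEcard', ?_⟩
      rw [ha]
      rw [hEsum]
      have : ((k : ℤ) - p) = ((k - p : ℕ) : ℤ) := by push_cast; omega
      push_cast
      omega
    -- non-edge through v
    obtain ⟨F, hFcard, hFv, hFsum⟩ := build n p hpn (p - 1) (k - p + 1) (by omega) (by omega) v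
      (by rcases lt_or_ge (v : ℕ) p with h | h
          · exact Or.inl ⟨h, by omega⟩
          · exact Or.inr ⟨h, by omega⟩)
    have hFcard' : F.card = k := by rw [hFcard]; omega
    have hFH : F ∉ Finset.univ.filter (fun E => E.card = k ∧ 0 ≤ ∑ v ∈ E, a v) := by
      intro hmem
      have h0 := (Finset.mem_filter.mp hmem).2.2
      rw [ha, hFsum] at h0
      have h1 : ((p - 1 : ℕ) : ℤ) = (p : ℤ) - 1 := by push_cast; omega
      have h2 : ((k - p + 1 : ℕ) : ℤ) = (k : ℤ) - p + 1 := by push_cast; omega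
      rw [h1, h2] at h0
      omega
    rcases helim i with hdom | hiso
    · exact hFH (hdom F hFcard' hFv (htake F))
    · exact (hiso E hEcard' hEv (htake E)) hEH
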